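/- For all real numbers 0 < m ≤ M there exist a constant C > 0 and an integer n₀ ≥ 2 such that: for every n ≥ n₀ and every invertible n×n real matrix A = (a_{ij}) with m ≤ a_{ij} ≤ M for all i ≠ j and 0 ≤ a_{ii} − Σ_{j≠i} a_{ji} ≤ M for all i, one has ‖A⁻¹‖_∞ ≤ C/n. (Row-norm bound on the inverse used for the Jacobian of the degree moment equations.) -/

import Mathlib

set_option maxHeartbeats 1000000


open Finset

/-- Explicit constant bounding `|z k|` in the key lemma. -/
noncomputable def Cz (m M : ℝ) : ℝ :=
  3 + 2*M/m + m^2/(2*M^2) + 2*M/m*(8*M^2/m^2+1)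

lemma Cz_pos (m M : ℝ) (hm : 0 < m) (hM : 0 < M) : 0 < Cz m M := by
  unfold Cz; positivity

/-- Key lemma: if `A u = s` with `0 ≤ s ≤ 1` entrywise, then `‖u‖∞ ≤ C/n`. -/
lemma key_bound (m M : ℝ) (hm : 0 < m) (hmM : m ≤ M)
    (n : ℕ) (hn : 4 ≤ n) (hnM : M ≤ ((n:ℝ) - 1) * m)
    (A : Matrix (Fin n) (Fin n) ℝ)
    (hoff : ∀ i j : Fin n, i ≠ j → m ≤ A i j ∧ A i j ≤ M)
    (hdom : ∀ i : Fin n, 0 ≤ A i i - ∑ j ∈ univ.erase i, A j i ∧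
      A i i - ∑ j ∈ univ.erase i, A j i ≤ M)
    (u s : Fin n → ℝ) (hus : A.mulVec u = s)
    (hs : ∀ k, 0 ≤ s k ∧ s k ≤ 1) :
    ∀ j, |u j| ≤ 2 * Cz m M / (m * n) := by
  have hM : 0 < M := lt_of_lt_of_le hm hmM
  set N : ℝ := (n : ℝ) with hNdef
  have hN4 : (4:ℝ) ≤ N := by rw [hNdef]; exact_mod_cast hn
  have hNpos : 0 < N := by linarith
  have hN1 : 0 < N - 1 := by linarith
  have hcard_erase : ∀ j : Fin n, ((univ.erase j).card : ℝ) = N - 1 := by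
    intro j
    rw [card_erase_of_mem (mem_univ j), card_univ, Fintype.card_fin,
      Nat.cast_sub (by omega : 1 ≤ n), Nat.cast_one]
  -- bounds on off-diagonal column sums
  have hsum_lb : ∀ j : Fin n, (N-1)*m ≤ ∑ k ∈ univ.erase j, A k j := by
    intro j
    have h := Finset.card_nsmul_le_sum (univ.erase j) (fun k => A k j) m
      (fun k hk => (hoff k j (Finset.ne_of_mem_erase hk)).1)
    rw [nsmul_eq_mul, hcard_erase j] at h
    exact h
  have hsum_ub : ∀ j : Fin n, ∑ k ∈ univ.erase j, A k j ≤ (N-1)*M := by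
    intro j
    have h := Finset.sum_le_card_nsmul (univ.erase j) (fun k => A k j) M
      (fun k hk => (hoff k j (Finset.ne_of_mem_erase hk)).2)
    rw [nsmul_eq_mul, hcard_erase j] at h
    exact h
  -- diagonal bounds
  have hdlb : ∀ j : Fin n, (N-1)*m ≤ A j j := by
    intro j; have h := (hdom j).1; linarith [hsum_lb j]
  have hdub : ∀ j : Fin n, A j j ≤ N*M := by
    intro j; have h := (hdom j).2; have h2 := hsum_ub j
    have e : (N-1)*M + M = N*M := by ring
    linarith
  have hdpos : ∀ j : Fin n, 0 < A j j := by
    intro j; have := hdlb j; nlinarith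
  -- the column-normalized off-diagonal matrix
  set ε : ℝ := M/((N-1)*m) with hεdef
  have hεpos : 0 < ε := by positivity
  have hεle1 : ε ≤ 1 := by
    rw [hεdef, div_le_one (by positivity)]; exact hnM
  set q : Fin n → Fin n → ℝ := fun k j => if k = j then 0 else A k j / A j j with hqdef
  set z : Fin n → ℝ := fun j => A j j * u j with hzdef
  have hq0 : ∀ k j, 0 ≤ q k j := by
    intro k j
    by_cases h : k = j
    · simp [hqdef, h]
    · have h1 := (hoff k j h).1
      have h2 := hdpos j
      simp only [hqdef, if_neg h]
      exact div_nonneg (by linarith) h2.le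
  have hqub : ∀ k j, q k j ≤ ε := by
    intro k j
    by_cases h : k = j
    · simp only [hqdef, if_pos h]; positivity
    · simp only [hqdef, if_neg h]
      exact div_le_div₀ (le_of_lt hM) (hoff k j h).2 (by positivity) (hdlb j)
  have hqlb : ∀ k j, k ≠ j → m/(N*M) ≤ q k j := by
    intro k j h
    simp only [hqdef, if_neg h]
    exact div_le_div₀ (by linarith [(hoff k j h).1]) (hoff k j h).1 (hdpos j) (hdub j)
  -- the fundamental equation z + Q z = s
  have hE1 : ∀ k, z k + ∑ j, q k j * z j = s k := by
    intro k
    have hrow : ∑ j, A k j * u j = s k := by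
      have := congrFun hus k
      simpa [Matrix.mulVec, dotProduct] using this
    have e : ∀ j : Fin n, A k j * u j = q k j * z j + if j = k then z k else 0 := by
      intro j
      by_cases h : j = k
      · subst h; simp [hqdef, hzdef]
      · have h' : k ≠ j := fun hh => h hh.symm
        have hAj := (hdpos j).ne'
        simp only [hqdef, hzdef, if_neg h', if_neg h, add_zero]
        field_simp
    rw [Finset.sum_congr rfl (fun j _ => e j), Finset.sum_add_distrib,
      Finset.sum_ite_eq' univ k (fun _ => z k), if_pos (mem_univ k)] at hrow
    linarith [hrow]
  -- column sums of q
  set Sc : Fin n → ℝ := fun j => ∑ k, q k j with hScdef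
  have hScval : ∀ j, Sc j = (∑ k ∈ univ.erase j, A k j) / A j j := by
    intro j
    have h0 : Sc j = ∑ k, q k j := rfl
    have h1 : ∀ k ∈ univ.erase j, q k j = A k j / A j j := by
      intro k hk
      simp only [hqdef, if_neg (Finset.ne_of_mem_erase hk)]
    rw [h0, ← Finset.sum_erase (f := fun k => q k j) univ (show q j j = 0 by simp [hqdef]),
      Finset.sum_congr rfl h1, ← Finset.sum_div]
  have hScub : ∀ j, Sc j ≤ 1 := by
    intro j
    rw [hScval j, div_le_one (hdpos j)]
    linarith [(hdom j).1]
  have hSclb : ∀ j, 1 - ε ≤ Sc j := by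
    intro j
    rw [hScval j]
    have h2 := (hdom j).2
    have h3 := hdpos j
    have h4 : 1 - (∑ k ∈ univ.erase j, A k j) / A j j
        = (A j j - ∑ k ∈ univ.erase j, A k j) / A j j := by field_simp
    have h5 : (A j j - ∑ k ∈ univ.erase j, A k j) / A j j ≤ ε :=
      div_le_div₀ (le_of_lt hM) h2 (by positivity) (hdlb j)
    linarith
  -- row sums of q
  have hNε : N * ε ≤ 2*M/m := by
    have e1 : N * ε = (N*M)/((N-1)*m) := by rw [hεdef]; ring
    rw [e1, div_le_div_iff₀ (by positivity) hm]
    nlinarith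
  have hrowq : ∀ k, ∑ j, q k j ≤ 2*M/m := by
    intro k
    have h1 : ∑ j, q k j ≤ ∑ _j : Fin n, ε :=
      Finset.sum_le_sum (fun j _ => hqub k j)
    rw [Finset.sum_const, card_univ, Fintype.card_fin, nsmul_eq_mul] at h1
    calc ∑ j, q k j ≤ (n:ℝ) * ε := h1
      _ ≤ 2*M/m := hNε
  -- the second-order matrix T = Q²
  set T : Fin n → Fin n → ℝ := fun k l => ∑ j, q k j * q j l with hTdef
  set δ : ℝ := m^2/(2*M^2) with hδdef
  have hδpos : 0 < δ := by positivity
  set a : ℝ := δ/N with hadef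
  have hapos : 0 < a := by positivity
  have haN : N * a = δ := by rw [hadef]; field_simp
  have hTlb : ∀ k l, a ≤ T k l := by
    intro k l
    have hsub : (univ.erase k).erase l ⊆ univ := Finset.subset_univ _
    have hterm : ∀ j ∈ (univ.erase k).erase l, (m/(N*M))^2 ≤ q k j * q j l := by
      intro j hj
      have hjl : j ≠ l := Finset.ne_of_mem_erase hj
      have hjk : j ≠ k := Finset.ne_of_mem_erase (Finset.mem_of_mem_erase hj)
      have h1 := hqlb k j (fun h => hjk h.symm)
      have h2 := hqlb j l hjl
      have hp : 0 < m/(N*M) := by positivity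
      calc (m/(N*M))^2 = (m/(N*M)) * (m/(N*M)) := sq (m/(N*M)) ▸ by ring
        _ ≤ q k j * q j l := mul_le_mul h1 h2 hp.le (le_trans hp.le h1)
    have hcard2 : (N - 2) ≤ (((univ.erase k).erase l).card : ℝ) := by
      have h1 : (univ.erase k).card - 1 ≤ ((univ.erase k).erase l).card :=
        Finset.pred_card_le_card_erase
      have h2 : (univ.erase k).card = n - 1 := by
        rw [card_erase_of_mem (mem_univ k), card_univ, Fintype.card_fin]
      have h3 : n - 2 ≤ ((univ.erase k).erase l).card := by omega
      calc N - 2 = ((n - 2 : ℕ) : ℝ) := by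
            rw [Nat.cast_sub (by omega : 2 ≤ n)]; push_cast; ring
        _ ≤ _ := by exact_mod_cast h3
    have hsum1 : (((univ.erase k).erase l).card : ℝ) * (m/(N*M))^2
        ≤ ∑ j ∈ (univ.erase k).erase l, q k j * q j l := by
      have := Finset.card_nsmul_le_sum ((univ.erase k).erase l)
        (fun j => q k j * q j l) ((m/(N*M))^2) hterm
      rwa [nsmul_eq_mul] at this
    have hsum2 : ∑ j ∈ (univ.erase k).erase l, q k j * q j l ≤ T k l := by
      apply Finset.sum_le_sum_of_subset_of_nonneg hsub
      intro j _ _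
      exact mul_nonneg (hq0 k j) (hq0 j l)
    have hNsq : 0 < m/(N*M) := by positivity
    have hstep : a ≤ (N - 2) * (m/(N*M))^2 := by
      have e : (N/2) * (m/(N*M))^2 = a := by
        rw [hadef, hδdef]; field_simp
      rw [← e]
      apply mul_le_mul_of_nonneg_right (by linarith) (by positivity)
    calc a ≤ (N-2) * (m/(N*M))^2 := hstep
      _ ≤ (((univ.erase k).erase l).card : ℝ) * (m/(N*M))^2 :=
          mul_le_mul_of_nonneg_right hcard2 (by positivity)
      _ ≤ ∑ j ∈ (univ.erase k).erase l, q k j * q j l := hsum1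
      _ ≤ T k l := hsum2
  have hTub : ∀ k l, T k l ≤ 2*M/m/N := by
    intro k l
    have h1 : T k l ≤ ∑ j, ε * q j l :=
      Finset.sum_le_sum (fun j _ => mul_le_mul_of_nonneg_right (hqub k j) (hq0 j l))
    have h2 : ∑ j, ε * q j l = ε * Sc l := by
      rw [← Finset.mul_sum]
    have h3 : ε * Sc l ≤ ε := by
      nlinarith [hScub l, hSclb l]
    have h4 : ε ≤ 2*M/m/N := by
      rw [le_div_iff₀ hNpos, mul_comm]; exact hNε
    calc T k l ≤ ∑ j, ε * q j l := h1
      _ = ε * Sc l := h2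
      _ ≤ ε := h3
      _ ≤ 2*M/m/N := h4
  have hTcolub : ∀ l, ∑ k, T k l ≤ 1 := by
    intro l
    have h1 : ∑ k, T k l = ∑ j, Sc j * q j l := by
      rw [Finset.sum_comm]
      apply Finset.sum_congr rfl
      intro j _
      rw [← Finset.sum_mul]
    rw [h1]
    calc ∑ j, Sc j * q j l ≤ ∑ j, 1 * q j l :=
          Finset.sum_le_sum (fun j _ => mul_le_mul_of_nonneg_right (hScub j) (hq0 j l))
      _ = Sc l := by simp [hScdef]
      _ ≤ 1 := hScub l
  -- the key vector w and the second-order equation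
  set w : Fin n → ℝ := fun k => s k - ∑ j, q k j * s j with hwdef
  have hE2 : ∀ k, z k = w k + ∑ l, T k l * z l := by
    intro k
    have hz' : ∀ j, z j = s j - ∑ l, q j l * z l := by
      intro j; linarith [hE1 j]
    have step1 : z k = s k - ∑ j, q k j * z j := by linarith [hE1 k]
    have step2 : ∑ j, q k j * z j
        = ∑ j, q k j * s j - ∑ j, q k j * ∑ l, q j l * z l := by
      rw [← Finset.sum_sub_distrib]
      apply Finset.sum_congr rfl
      intro j _
      rw [hz' j]; ring
    have step3 : ∑ j, q k j * ∑ l, q j l * z l = ∑ l, T k l * z l := by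
      have e1 : ∀ j : Fin n, q k j * ∑ l, q j l * z l = ∑ l, q k j * q j l * z l := by
        intro j; rw [Finset.mul_sum]; apply Finset.sum_congr rfl; intro l _; ring
      rw [Finset.sum_congr rfl (fun j _ => e1 j), Finset.sum_comm]
      apply Finset.sum_congr rfl
      intro l _
      rw [← Finset.sum_mul]
    rw [step1, step2, step3]
    have : w k = s k - ∑ j, q k j * s j := rfl
    rw [this]; ring
  -- bounds on w
  have hw_ub : ∀ k, |w k| ≤ 1 + 2*M/m := by
    intro k
    have h1 : 0 ≤ ∑ j, q k j * s j :=
      Finset.sum_nonneg (fun j _ => mul_nonneg (hq0 k j) (hs j).1)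
    have h2 : ∑ j, q k j * s j ≤ ∑ j, q k j :=
      Finset.sum_le_sum (fun j _ => by nlinarith [(hs j).1, (hs j).2, hq0 k j])
    have h3 := hrowq k
    have h4 := (hs k).1
    have h5 := (hs k).2
    have hwk : w k = s k - ∑ j, q k j * s j := rfl
    rw [abs_le, hwk]
    constructor <;> linarith
  have hzu : ∀ j : Fin n, z j = A j j * u j := fun j => rfl
  have hwk2 : ∀ k : Fin n, w k = s k - ∑ j, q k j * s j := fun k => rfl
  have hScsum : ∀ j : Fin n, Sc j = ∑ k, q k j := fun j => rfl
  clear_value q z Sc T w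
  -- scalar quantities
  set t : ℝ := ∑ j, z j with htdef
  set Z : ℝ := ∑ j, |z j| with hZdef
  clear_value t Z
  have hZ0 : 0 ≤ Z := by rw [hZdef]; exact Finset.sum_nonneg (fun j _ => abs_nonneg _)
  have ht0 : 0 ≤ |t| := abs_nonneg _
  have hS0ub : ∑ k, s k ≤ N := by
    have h := Finset.sum_le_card_nsmul univ s 1 (fun k _ => (hs k).2)
    rwa [nsmul_eq_mul, card_univ, Fintype.card_fin, mul_one] at h
  have hS0lb : 0 ≤ ∑ k, s k := Finset.sum_nonneg (fun k _ => (hs k).1)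
  -- total bound on |w|
  have hW : ∑ k, |w k| ≤ 2*N := by
    have h1 : ∀ k, |w k| ≤ s k + ∑ j, q k j * s j := by
      intro k
      have hwk := hwk2 k
      have h2 : 0 ≤ ∑ j, q k j * s j :=
        Finset.sum_nonneg (fun j _ => mul_nonneg (hq0 k j) (hs j).1)
      rw [hwk, abs_le]
      constructor <;> linarith [(hs k).1]
    calc ∑ k, |w k| ≤ ∑ k, (s k + ∑ j, q k j * s j) :=
          Finset.sum_le_sum (fun k _ => h1 k)
      _ = (∑ k, s k) + ∑ j, Sc j * s j := by
          rw [Finset.sum_add_distrib]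
          congr 1
          rw [Finset.sum_comm]
          apply Finset.sum_congr rfl
          intro j _
          rw [hScsum j, Finset.sum_mul]
      _ ≤ N + N := by
          have h3 : ∑ j, Sc j * s j ≤ ∑ j, s j :=
            Finset.sum_le_sum (fun j _ => mul_le_of_le_one_left (hs j).1 (hScub j))
          linarith
      _ = 2*N := by ring
  -- step A : δ Z ≤ 2N + δ|t|
  have hsplit : ∀ k, z k = w k + (∑ l, (T k l - a) * z l) + a * t := by
    intro k
    have h1 : ∑ l, T k l * z l = (∑ l, (T k l - a) * z l) + a * t := by
      rw [htdef, Finset.mul_sum, ← Finset.sum_add_distrib]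
      apply Finset.sum_congr rfl
      intro l _
      ring
    rw [hE2 k, h1]
    ring
  have habs : ∀ k, |z k| ≤ |w k| + (∑ l, (T k l - a) * |z l|) + a * |t| := by
    intro k
    have hX : |∑ l, (T k l - a) * z l| ≤ ∑ l, (T k l - a) * |z l| := by
      refine le_trans (Finset.abs_sum_le_sum_abs _ _) (Finset.sum_le_sum ?_)
      intro l _
      rw [abs_mul, abs_of_nonneg (by linarith [hTlb k l] : (0:ℝ) ≤ T k l - a)]
    calc |z k| = |w k + (∑ l, (T k l - a) * z l) + a * t| := by rw [← hsplit k]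
      _ ≤ |w k + (∑ l, (T k l - a) * z l)| + |a * t| := abs_add_le _ _
      _ ≤ |w k| + |∑ l, (T k l - a) * z l| + |a * t| := by linarith [abs_add_le (w k) (∑ l, (T k l - a) * z l)]
      _ ≤ |w k| + (∑ l, (T k l - a) * |z l|) + a * |t| := by
          rw [abs_mul, abs_of_pos hapos]
          linarith
  have hTcol' : ∀ l, ∑ k, (T k l - a) ≤ 1 - δ := by
    intro l
    rw [Finset.sum_sub_distrib, Finset.sum_const, card_univ, Fintype.card_fin, nsmul_eq_mul]
    have h := hTcolub l
    have : (n:ℝ) * a = δ := haN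
    linarith
  have hstepA : δ * Z ≤ 2*N + δ * |t| := by
    have h1 : Z ≤ ∑ k, (|w k| + (∑ l, (T k l - a) * |z l|) + a * |t|) := by
      rw [hZdef]
      exact Finset.sum_le_sum (fun k _ => habs k)
    have h2 : ∑ k, (|w k| + (∑ l, (T k l - a) * |z l|) + a * |t|)
        = (∑ k, |w k|) + (∑ k, ∑ l, (T k l - a) * |z l|) + N * (a * |t|) := by
      rw [Finset.sum_add_distrib, Finset.sum_add_distrib, Finset.sum_const,
        card_univ, Fintype.card_fin, nsmul_eq_mul]
    have h3 : ∑ k, ∑ l, (T k l - a) * |z l| ≤ (1-δ) * Z := by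
      rw [Finset.sum_comm]
      calc ∑ l, ∑ k, (T k l - a) * |z l|
          = ∑ l, (∑ k, (T k l - a)) * |z l| := by
            apply Finset.sum_congr rfl
            intro l _
            rw [Finset.sum_mul]
        _ ≤ ∑ l, (1-δ) * |z l| :=
            Finset.sum_le_sum (fun l _ =>
              mul_le_mul_of_nonneg_right (hTcol' l) (abs_nonneg _))
        _ = (1-δ) * Z := by rw [hZdef, ← Finset.mul_sum]
    have h4 : N * (a * |t|) = δ * |t| := by rw [← haN]; ring
    rw [h2] at h1
    linarith [hW]
  -- step B : 2|t| ≤ N + ε Z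
  have hsumE : t + ∑ j, Sc j * z j = ∑ k, s k := by
    have h1 : ∑ k, (z k + ∑ j, q k j * z j) = ∑ k, s k :=
      Finset.sum_congr rfl (fun k _ => hE1 k)
    rw [Finset.sum_add_distrib] at h1
    have h2 : ∑ k, ∑ j, q k j * z j = ∑ j, Sc j * z j := by
      rw [Finset.sum_comm]
      apply Finset.sum_congr rfl
      intro j _
      rw [hScsum j, Finset.sum_mul]
    rw [h2] at h1
    rw [htdef]
    exact h1
  have h2t : 2*|t| ≤ N + ε*Z := by
    have he : 2*t = (∑ k, s k) + ∑ j, (1 - Sc j) * z j := by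
      have h1 : ∑ j, (1 - Sc j) * z j = t - ∑ j, Sc j * z j := by
        rw [htdef, ← Finset.sum_sub_distrib]
        apply Finset.sum_congr rfl
        intro j _
        ring
      linarith [hsumE]
    have h3 : |∑ j, (1-Sc j)*z j| ≤ ∑ j, (1-Sc j)*|z j| := by
      refine le_trans (Finset.abs_sum_le_sum_abs _ _) (Finset.sum_le_sum ?_)
      intro j _
      rw [abs_mul, abs_of_nonneg (by linarith [hScub j] : (0:ℝ) ≤ 1 - Sc j)]
    have h4 : ∑ j, (1-Sc j)*|z j| ≤ ∑ j, ε*|z j| :=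
      Finset.sum_le_sum (fun j _ =>
        mul_le_mul_of_nonneg_right (by linarith [hSclb j]) (abs_nonneg _))
    have h5 : ∑ j, ε*|z j| = ε*Z := by rw [hZdef, ← Finset.mul_sum]
    have h6 : |2*t| ≤ |∑ k, s k| + |∑ j, (1-Sc j)*z j| := he ▸ abs_add_le _ _
    have h7 : |∑ k, s k| = ∑ k, s k := abs_of_nonneg hS0lb
    have h8 : |2*t| = 2*|t| := by rw [abs_mul, abs_of_nonneg (by norm_num : (0:ℝ) ≤ 2)]
    linarith
  -- combine : Z and t bounds
  have hεZ : ε*Z ≤ Z := mul_le_of_le_one_left hZ0 hεle1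
  have hZb : Z ≤ (8*M^2/m^2 + 1) * N := by
    have hδ8 : δ * (8*M^2/m^2) = 4 := by rw [hδdef]; field_simp; ring
    apply le_of_mul_le_mul_left _ hδpos
    have e : δ * ((8*M^2/m^2 + 1)*N) = (4 + δ) * N := by linear_combination N * hδ8
    rw [e]
    have hd0 : (0:ℝ) ≤ δ/2 := by positivity
    have hd1 : (δ/2)*(2*|t|) ≤ (δ/2)*(N + ε*Z) := mul_le_mul_of_nonneg_left h2t hd0
    have hd2 : (δ/2)*(N + ε*Z) ≤ (δ/2)*(N + Z) := mul_le_mul_of_nonneg_left (by linarith [hεZ]) hd0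
    have e1 : (δ/2)*(2*|t|) = δ*|t| := by ring
    have e2 : (δ/2)*(N + Z) = δ*N/2 + δ*Z/2 := by ring
    have hd3 : δ*|t| ≤ δ*N/2 + δ*Z/2 := by linarith
    linarith [hstepA]
  have htb : |t| ≤ (4*M^2/m^2 + 1) * N := by
    have h9 : 2*|t| ≤ 2*((4*M^2/m^2+1)*N) := by
      calc 2*|t| ≤ N + ε*Z := h2t
        _ ≤ N + Z := by linarith
        _ ≤ N + (8*M^2/m^2+1)*N := by linarith
        _ = 2*((4*M^2/m^2+1)*N) := by ring
    linarith
  -- step C : pointwise bound on z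
  have hzb : ∀ k, |z k| ≤ Cz m M := by
    intro k
    have h1 := habs k
    have h2 : ∑ l, (T k l - a)*|z l| ≤ (2*M/m/N) * Z := by
      calc ∑ l, (T k l - a)*|z l| ≤ ∑ l, (2*M/m/N)*|z l| :=
            Finset.sum_le_sum (fun l _ =>
              mul_le_mul_of_nonneg_right (by linarith [hTub k l, hapos]) (abs_nonneg _))
        _ = (2*M/m/N)*Z := by rw [hZdef, ← Finset.mul_sum]
    have h3 : (2*M/m/N) * Z ≤ 2*M/m*(8*M^2/m^2+1) := by
      have e : (2*M/m/N) * ((8*M^2/m^2+1)*N) = 2*M/m*(8*M^2/m^2+1) := by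
        field_simp
      calc (2*M/m/N)*Z ≤ (2*M/m/N)*((8*M^2/m^2+1)*N) :=
            mul_le_mul_of_nonneg_left hZb (by positivity)
        _ = _ := e
    have h4 : a * |t| ≤ 2 + m^2/(2*M^2) := by
      have e : a * ((4*M^2/m^2+1)*N) = 2 + m^2/(2*M^2) := by
        rw [hadef, hδdef]
        field_simp
        ring
      calc a*|t| ≤ a*((4*M^2/m^2+1)*N) := mul_le_mul_of_nonneg_left htb hapos.le
        _ = _ := e
    have h5 := hw_ub k
    unfold Cz
    linarith
  -- step D : conclude
  intro j
  have hAj := hdpos j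
  have huj : u j = z j / A j j := by
    rw [hzu j]
    field_simp
  have hCzpos : 0 < Cz m M := Cz_pos m M hm hM
  have h1 : |u j| = |z j| / A j j := by
    rw [huj, abs_div, abs_of_pos hAj]
  have h2 : |z j| / A j j ≤ Cz m M / ((N-1)*m) :=
    div_le_div₀ hCzpos.le (hzb j) (by positivity) (hdlb j)
  have h3 : Cz m M / ((N-1)*m) ≤ 2 * Cz m M / (m*N) := by
    rw [div_le_div_iff₀ (by positivity) (by positivity)]
    nlinarith
  rw [h1]
  exact le_trans h2 h3

theorem inverse_row_norm_bound
    (m M : ℝ) (hm : 0 < m) (hmM : m ≤ M) :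
    ∃ C : ℝ, 0 < C ∧ ∃ n₀ : ℕ, 2 ≤ n₀ ∧
      ∀ n : ℕ, n₀ ≤ n →
        ∀ A : Matrix (Fin n) (Fin n) ℝ, IsUnit A.det →
          (∀ i j : Fin n, i ≠ j → m ≤ A i j ∧ A i j ≤ M) →
          (∀ i : Fin n, 0 ≤ A i i - ∑ j ∈ univ.erase i, A j i ∧
            A i i - ∑ j ∈ univ.erase i, A j i ≤ M) →
          ∀ i : Fin n, ∑ j, |A⁻¹ i j| ≤ C / (n : ℝ) := by
  have hM : 0 < M := lt_of_lt_of_le hm hmM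
  refine ⟨4 * Cz m M / m, by have := Cz_pos m M hm hM; positivity, 4 + ⌈M/m⌉₊, by omega, ?_⟩
  intro n hn A hdet hoff hdom i
  have hn4 : 4 ≤ n := by omega
  have hnM : M ≤ ((n:ℝ) - 1) * m := by
    have h1 : M/m ≤ (⌈M/m⌉₊ : ℝ) := Nat.le_ceil _
    have h2 : (⌈M/m⌉₊ : ℝ) ≤ (n:ℝ) - 1 := by
      have h3 : ⌈M/m⌉₊ + 1 ≤ n := by omega
      have h4 := (Nat.cast_le (α := ℝ)).2 h3
      push_cast at h4; linarith
    have h5 : M/m ≤ (n:ℝ) - 1 := le_trans h1 h2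
    calc M = (M/m)*m := by field_simp
      _ ≤ ((n:ℝ)-1)*m := mul_le_mul_of_nonneg_right h5 hm.le
  set B := A⁻¹ with hB
  have hAB : A * B = 1 := Matrix.mul_nonsing_inv A hdet
  set sp : Fin n → ℝ := fun j => if 0 ≤ B i j then 1 else 0 with hsp
  set sn : Fin n → ℝ := fun j => if 0 ≤ B i j then 0 else 1 with hsn
  have hup : A.mulVec (B.mulVec sp) = sp := by
    rw [Matrix.mulVec_mulVec, hAB, Matrix.one_mulVec]
  have hun : A.mulVec (B.mulVec sn) = sn := by
    rw [Matrix.mulVec_mulVec, hAB, Matrix.one_mulVec]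
  have h1 := key_bound m M hm hmM n hn4 hnM A hoff hdom _ _ hup
    (fun k => by by_cases h : 0 ≤ B i k <;> simp [hsp, h])
  have h2 := key_bound m M hm hmM n hn4 hnM A hoff hdom _ _ hun
    (fun k => by by_cases h : 0 ≤ B i k <;> simp [hsn, h])
  have hsum : ∑ j, |B i j| = B.mulVec sp i - B.mulVec sn i := by
    simp only [Matrix.mulVec, dotProduct]
    rw [← Finset.sum_sub_distrib]
    apply Finset.sum_congr rfl
    intro j _
    by_cases h : 0 ≤ B i j
    · simp [hsp, hsn, h, abs_of_nonneg h]
    · simp [hsp, hsn, h, abs_of_neg (lt_of_not_ge h)]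
  rw [hsum]
  have e1 := abs_le.mp (h1 i)
  have e2 := abs_le.mp (h2 i)
  have hNpos : (0:ℝ) < n := by positivity
  have heq : 4 * Cz m M / m / n = 2 * (2 * Cz m M / (m * n)) := by
    field_simp; ring
  rw [heq]
  linarith [e1.1, e1.2, e2.1, e2.2]
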